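/- Let z₁, …, zₙ, z be vectors in a complex inner product space and μ₁, …, μₙ ∈ ℂ. With (x,y|z) := ⟪x,y⟫‖z‖² − ⟪x,z⟫⟪z,y⟫ and ‖x|z‖ := √(x,x|z), one has ‖∑_{i=1}^n μᵢ zᵢ | z‖² ≤ (∑_{i=1}^n |μᵢ|²) · [max_{1≤i≤n} ‖zᵢ|z‖² + (∑_{1 ≤ i ≠ j ≤ n} |(zᵢ,zⱼ|z)|²)^{1/2}]. -/

import Mathlib

open scoped BigOperators

/-- The standard 2-inner product on a complex inner product space:
`(x,y|z) = ⟪x,y⟫‖z‖² − ⟪x,z⟫⟪z,y⟫`. -/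
noncomputable def tinner {H : Type*} [NormedAddCommGroup H] [InnerProductSpace ℂ H]
    (x y z : H) : ℂ :=
  (inner ℂ x y : ℂ) * ((‖z‖ : ℂ) ^ 2) - (inner ℂ x z : ℂ) * (inner ℂ z y : ℂ)

/-- The associated 2-norm `‖x|z‖ = √(x,x|z)`. -/
noncomputable def tnorm {H : Type*} [NormedAddCommGroup H] [InnerProductSpace ℂ H]
    (x z : H) : ℝ :=
  Real.sqrt (tinner x x z).re

section Aux

variable {H : Type*} [NormedAddCommGroup H] [InnerProductSpace ℂ H]

lemma tinner_self_eq (x z : H) :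
    tinner x x z = ((‖x‖^2 * ‖z‖^2 - ‖(inner ℂ x z : ℂ)‖^2 : ℝ) : ℂ) := by
  have h1 : (inner ℂ x z : ℂ) * inner ℂ z x = ((‖(inner ℂ x z : ℂ)‖^2 : ℝ) : ℂ) := by
    rw [← inner_conj_symm x z, ← Complex.normSq_eq_conj_mul_self, Complex.sq_norm]
    rw [Complex.normSq_conj]
  have h2 : (inner ℂ x x : ℂ) = ((‖x‖:ℂ))^2 := inner_self_eq_norm_sq_to_K x
  rw [tinner, h1, h2]
  push_cast
  ring

lemma tinner_self_re_nonneg (x z : H) : 0 ≤ (tinner x x z).re := by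
  rw [tinner_self_eq]
  simp only [Complex.ofReal_re]
  have h := norm_inner_le_norm (𝕜 := ℂ) x z
  nlinarith [norm_nonneg (inner ℂ x z : ℂ), norm_nonneg x, norm_nonneg z]

lemma tinner_sum_left {n : ℕ} (f : Fin n → H) (y z : H) :
    tinner (∑ i, f i) y z = ∑ i, tinner (f i) y z := by
  simp [tinner, sum_inner, Finset.sum_mul, Finset.sum_sub_distrib]

lemma tinner_sum_right {n : ℕ} (x : H) (f : Fin n → H) (z : H) :
    tinner x (∑ i, f i) z = ∑ i, tinner x (f i) z := by
  simp [tinner, inner_sum, Finset.sum_mul, Finset.mul_sum, Finset.sum_sub_distrib]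

lemma tinner_smul_left (c : ℂ) (x y z : H) :
    tinner (c • x) y z = (starRingEnd ℂ) c * tinner x y z := by
  simp [tinner, inner_smul_left]; ring

lemma tinner_smul_right (c : ℂ) (x y z : H) :
    tinner x (c • y) z = c * tinner x y z := by
  simp [tinner, inner_smul_right]; ring

lemma tinner_sum_sum {n : ℕ} (zv : Fin n → H) (z : H) (μ : Fin n → ℂ) :
    tinner (∑ i, μ i • zv i) (∑ j, μ j • zv j) z
      = ∑ i, ∑ j, (starRingEnd ℂ) (μ i) * μ j * tinner (zv i) (zv j) z := by
  rw [tinner_sum_left]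
  refine Finset.sum_congr rfl fun i _ => ?_
  rw [tinner_smul_left, tinner_sum_right, Finset.mul_sum]
  refine Finset.sum_congr rfl fun j _ => ?_
  rw [tinner_smul_right]
  ring

lemma tnorm_sq (x z : H) : tnorm x z ^ 2 = (tinner x x z).re :=
  Real.sq_sqrt (tinner_self_re_nonneg x z)

lemma sum_split_diag {n : ℕ} (f : Fin n → Fin n → ℝ) :
    ∑ i, ∑ j, f i j = (∑ i, f i i) + ∑ i, ∑ j, if i ≠ j then f i j else 0 := by
  rw [← Finset.sum_add_distrib]
  refine Finset.sum_congr rfl fun i _ => ?_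
  have : ∀ j, f i j = (if i = j then f i j else 0) + (if i ≠ j then f i j else 0) := by
    intro j; by_cases h : i = j <;> simp [h]
  calc ∑ j, f i j = ∑ j, ((if i = j then f i j else 0) + (if i ≠ j then f i j else 0)) :=
        Finset.sum_congr rfl fun j _ => this j
    _ = _ := by rw [Finset.sum_add_distrib, Finset.sum_ite_eq]; simp

end Aux

theorem tnorm_sum_sq_le_sum_mul {H : Type*} [NormedAddCommGroup H] [InnerProductSpace ℂ H]
    (n : ℕ) (hn : 0 < n) (zv : Fin n → H) (z : H) (μ : Fin n → ℂ) :
    tnorm (∑ i, μ i • zv i) z ^ 2 ≤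
      (∑ i, ‖μ i‖ ^ 2) *
        ((Finset.univ.sup' ⟨⟨0, hn⟩, Finset.mem_univ _⟩ fun i => tnorm (zv i) z ^ 2) +
          Real.sqrt (∑ i, ∑ j, if i ≠ j then ‖tinner (zv i) (zv j) z‖ ^ 2 else 0)) := by
  set A := ∑ i, ‖μ i‖ ^ 2 with hA
  set M := Finset.univ.sup' ⟨⟨0, hn⟩, Finset.mem_univ _⟩ fun i => tnorm (zv i) z ^ 2 with hM
  set S := ∑ i, ∑ j, if i ≠ j then ‖tinner (zv i) (zv j) z‖ ^ 2 else 0 with hS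
  have hA0 : 0 ≤ A := Finset.sum_nonneg fun i _ => sq_nonneg _
  -- expand the left side
  have h1 : tnorm (∑ i, μ i • zv i) z ^ 2
      = ∑ i, ∑ j, ((starRingEnd ℂ) (μ i) * μ j * tinner (zv i) (zv j) z).re := by
    rw [tnorm_sq, tinner_sum_sum]
    simp [Complex.re_sum]
  rw [h1, sum_split_diag]
  -- diagonal bound
  have hdiag : (∑ i, ((starRingEnd ℂ) (μ i) * μ i * tinner (zv i) (zv i) z).re) ≤ A * M := by
    rw [hA, Finset.sum_mul]
    refine Finset.sum_le_sum fun i _ => ?_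
    have h2 : (starRingEnd ℂ) (μ i) * μ i = ((‖μ i‖ ^ 2 : ℝ) : ℂ) := by
      rw [← Complex.normSq_eq_conj_mul_self, Complex.sq_norm]
    rw [h2]
    have h3 : (((‖μ i‖ ^ 2 : ℝ) : ℂ) * tinner (zv i) (zv i) z).re
        = ‖μ i‖ ^ 2 * (tinner (zv i) (zv i) z).re := by
      simp [Complex.mul_re, ← Complex.ofReal_pow]
    rw [h3, ← tnorm_sq]
    exact mul_le_mul_of_nonneg_left
      (Finset.le_sup' (f := fun i => tnorm (zv i) z ^ 2) (Finset.mem_univ i)) (sq_nonneg _)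
  -- off-diagonal bound
  have hod : (∑ i, ∑ j, if i ≠ j then ((starRingEnd ℂ) (μ i) * μ j * tinner (zv i) (zv j) z).re else 0)
      ≤ A * Real.sqrt S := by
    have step1 : (∑ i, ∑ j, if i ≠ j then ((starRingEnd ℂ) (μ i) * μ j * tinner (zv i) (zv j) z).re else 0)
        ≤ ∑ i, ∑ j, (if i ≠ j then ‖μ i‖ * ‖μ j‖ else 0) *
            (if i ≠ j then ‖tinner (zv i) (zv j) z‖ else 0) := by
      refine Finset.sum_le_sum fun i _ => Finset.sum_le_sum fun j _ => ?_
      by_cases h : i = j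
      · simp [h]
      · simp only [h, ne_eq, not_false_eq_true, if_true, if_pos]
        calc ((starRingEnd ℂ) (μ i) * μ j * tinner (zv i) (zv j) z).re
            ≤ ‖(starRingEnd ℂ) (μ i) * μ j * tinner (zv i) (zv j) z‖ :=
              Complex.re_le_norm _
          _ = ‖μ i‖ * ‖μ j‖ * ‖tinner (zv i) (zv j) z‖ := by
              simp [map_mul, Complex.norm_conj]
    refine step1.trans ?_
    -- Cauchy–Schwarz over the product type
    set F : Fin n × Fin n → ℝ := fun p => if p.1 ≠ p.2 then ‖μ p.1‖ * ‖μ p.2‖ else 0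
    set G : Fin n × Fin n → ℝ := fun p => if p.1 ≠ p.2 then ‖tinner (zv p.1) (zv p.2) z‖ else 0
    have hconv : (∑ i, ∑ j, (if i ≠ j then ‖μ i‖ * ‖μ j‖ else 0) *
            (if i ≠ j then ‖tinner (zv i) (zv j) z‖ else 0))
        = ∑ p : Fin n × Fin n, F p * G p := by
      rw [Fintype.sum_prod_type]
    rw [hconv]
    have hcs := Real.sum_mul_le_sqrt_mul_sqrt Finset.univ F G
    refine hcs.trans ?_
    have hF : Real.sqrt (∑ p : Fin n × Fin n, F p ^ 2) ≤ A := by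
      have hle : (∑ p : Fin n × Fin n, F p ^ 2) ≤ A ^ 2 := by
        have : A ^ 2 = ∑ p : Fin n × Fin n, ‖μ p.1‖ ^ 2 * ‖μ p.2‖ ^ 2 := by
          rw [sq, hA, Finset.sum_mul_sum, Fintype.sum_prod_type]
        rw [this]
        refine Finset.sum_le_sum fun p _ => ?_
        simp only [F]
        by_cases h : p.1 = p.2
        · simp [h]; positivity
        · simp [h, mul_pow]
      calc Real.sqrt (∑ p : Fin n × Fin n, F p ^ 2) ≤ Real.sqrt (A ^ 2) :=
            Real.sqrt_le_sqrt hle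
        _ = A := by rw [Real.sqrt_sq hA0]
    have hG : Real.sqrt (∑ p : Fin n × Fin n, G p ^ 2) = Real.sqrt S := by
      congr 1
      rw [hS, Fintype.sum_prod_type]
      refine Finset.sum_congr rfl fun i _ => Finset.sum_congr rfl fun j _ => ?_
      simp only [G]
      by_cases h : i = j <;> simp [h]
    rw [hG]
    exact mul_le_mul_of_nonneg_right hF (Real.sqrt_nonneg _)
  calc _ ≤ A * M + A * Real.sqrt S := add_le_add hdiag hod
    _ = A * (M + Real.sqrt S) := by ring
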